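/- Every eigenvalue of the adjacency matrix of a threshold graph that is strictly less than −1 is in fact strictly less than (−1−√2)/2. -/

import Mathlib

/-- A graph is a threshold graph if adjacency is determined by vertex weights
exceeding a threshold. -/
def SimpleGraph.IsThreshold {V : Type*} (G : SimpleGraph V) : Prop :=
  ∃ (S : ℝ) (w : V → ℝ), ∀ u v : V, u ≠ v → (G.Adj u v ↔ S < w u + w v)

/-- `μ` is an eigenvalue of the adjacency matrix of `G`. -/
def SimpleGraph.HasAdjEigenvalue {V : Type*} [Fintype V] (G : SimpleGraph V) (μ : ℝ) : Prop :=
  letI := Classical.decEq V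
  letI : DecidableRel G.Adj := Classical.decRel _
  ∃ x : V → ℝ, x ≠ 0 ∧ (G.adjMatrix ℝ).mulVec x = μ • x


open Finset

section ThresholdSetup

variable {V : Type*} [Fintype V] [DecidableEq V]

private noncomputable def Kd (S : ℝ) (w : V → ℝ) : Finset V := univ.filter (fun i => S < 2 * w i)

private noncomputable def NKd (S : ℝ) (w : V → ℝ) (j : V) : Finset V :=
  univ.filter (fun i => S < 2 * w i ∧ S < w i + w j)

private noncomputable def NId (S : ℝ) (w : V → ℝ) (i : V) : Finset V :=
  univ.filter (fun j => ¬(S < 2 * w j) ∧ S < w i + w j)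

private noncomputable def Nd (S : ℝ) (w : V → ℝ) : Finset (Finset V) :=
  (univ.filter (fun j => ¬(S < 2 * w j) ∧ (NKd S w j).Nonempty)).image (NKd S w)

private noncomputable def clsd (S : ℝ) (w : V → ℝ) (A : Finset V) : Finset V :=
  univ.filter (fun j => ¬(S < 2 * w j) ∧ NKd S w j = A)

private noncomputable def Bsupd (S : ℝ) (w : V → ℝ) (A : Finset V) : Finset V :=
  ((Nd S w).filter (fun C => C ⊂ A)).sup id

private lemma memK {S : ℝ} {w : V → ℝ} {i : V} : i ∈ Kd S w ↔ S < 2 * w i := by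
  simp [Kd]

private lemma memNK {S : ℝ} {w : V → ℝ} {i j : V} :
    i ∈ NKd S w j ↔ S < 2 * w i ∧ S < w i + w j := by simp [NKd]

private lemma memNI {S : ℝ} {w : V → ℝ} {i j : V} :
    j ∈ NId S w i ↔ ¬(S < 2 * w j) ∧ S < w i + w j := by simp [NId]

private lemma memcls {S : ℝ} {w : V → ℝ} {A : Finset V} {j : V} :
    j ∈ clsd S w A ↔ ¬(S < 2 * w j) ∧ NKd S w j = A := by simp [clsd]

private lemma memN {S : ℝ} {w : V → ℝ} {A : Finset V} :
    A ∈ Nd S w ↔ ∃ j, (¬(S < 2 * w j) ∧ (NKd S w j).Nonempty) ∧ NKd S w j = A := by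
  simp [Nd]


private lemma subset_Bsup {S : ℝ} {w : V → ℝ} {A C : Finset V} (hC : C ∈ Nd S w)
    (hCA : C ⊂ A) : C ⊆ Bsupd S w A := by
  have h : id C ≤ ((Nd S w).filter (fun D => D ⊂ A)).sup id :=
    Finset.le_sup (Finset.mem_filter.mpr ⟨hC, hCA⟩)
  simpa [Bsupd] using h

private lemma L_mono {S : ℝ} {w : V → ℝ} {j j' : V} (h : w j ≤ w j') :
    NKd S w j ⊆ NKd S w j' := by
  intro i hi
  obtain ⟨h1, h2⟩ := memNK.mp hi
  exact memNK.mpr ⟨h1, by linarith⟩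

private lemma L_compNK {S : ℝ} {w : V → ℝ} {A : Finset V} (hA : A ∈ Nd S w) (j : V) :
    NKd S w j ⊆ A ∨ A ⊆ NKd S w j := by
  obtain ⟨j0, _, hj0e⟩ := memN.mp hA
  rcases le_total (w j) (w j0) with h | h
  · exact Or.inl (hj0e ▸ L_mono h)
  · exact Or.inr (hj0e ▸ L_mono h)

private lemma L_comp {S : ℝ} {w : V → ℝ} {A B : Finset V} (hA : A ∈ Nd S w)
    (hB : B ∈ Nd S w) : A ⊆ B ∨ B ⊆ A := by
  obtain ⟨j, _, hje⟩ := memN.mp hA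
  rcases L_compNK hB j with h | h
  · exact Or.inl (hje ▸ h)
  · exact Or.inr (hje ▸ h)

private lemma L_NdK {S : ℝ} {w : V → ℝ} {A : Finset V} (hA : A ∈ Nd S w) :
    A ⊆ Kd S w ∧ A.Nonempty ∧ (clsd S w A).Nonempty := by
  obtain ⟨j, ⟨hjI, hjne⟩, hje⟩ := memN.mp hA
  refine ⟨?_, hje ▸ hjne, ⟨j, memcls.mpr ⟨hjI, hje⟩⟩⟩
  intro i hi
  exact memK.mpr (memNK.mp (hje ▸ hi)).1

private lemma L_Bsup {S : ℝ} {w : V → ℝ} {A : Finset V} (hA : A ∈ Nd S w) :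
    Bsupd S w A ⊆ A ∧ (A \ Bsupd S w A).Nonempty ∧
      (((Nd S w).filter (fun C => C ⊂ A)).Nonempty → Bsupd S w A ∈ Nd S w ∧ Bsupd S w A ⊂ A) := by
  have hsub : Bsupd S w A ⊆ A := by
    have h : ((Nd S w).filter (fun C => C ⊂ A)).sup id ≤ A :=
      Finset.sup_le fun C hC => Finset.le_iff_subset.mpr (Finset.mem_filter.mp hC).2.subset
    simp only [Bsupd]
    exact Finset.le_iff_subset.mp h
  have hMpart : ((Nd S w).filter (fun C => C ⊂ A)).Nonempty →
      Bsupd S w A ∈ Nd S w ∧ Bsupd S w A ⊂ A := by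
    intro hne
    obtain ⟨M, hM, hMmax'⟩ := Finset.exists_max_image _ Finset.card hne
    obtain ⟨hMN, hMA⟩ := Finset.mem_filter.mp hM
    have hMmax : ∀ C ∈ (Nd S w).filter (fun C => C ⊂ A), C ⊆ M := by
      intro C hC
      obtain ⟨hCN, _⟩ := Finset.mem_filter.mp hC
      rcases L_comp hCN hMN with h | h
      · exact h
      · exact Finset.le_iff_subset.mp (le_of_eq (Finset.eq_of_subset_of_card_le h (hMmax' C hC)).symm)
    have hBM : Bsupd S w A = M := by
      apply Finset.Subset.antisymm
      · have h : ((Nd S w).filter (fun C => C ⊂ A)).sup id ≤ M :=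
          Finset.sup_le fun C hC => Finset.le_iff_subset.mpr (hMmax C hC)
        simp only [Bsupd]
        exact Finset.le_iff_subset.mp h
      · exact subset_Bsup hMN hMA
    rw [hBM]
    exact ⟨hMN, hMA⟩
  refine ⟨hsub, ?_, hMpart⟩
  rw [Finset.sdiff_nonempty]
  intro hcon
  by_cases hne : ((Nd S w).filter (fun C => C ⊂ A)).Nonempty
  · obtain ⟨_, hBA⟩ := hMpart hne
    exact hBA.not_subset hcon
  · rw [Finset.not_nonempty_iff_eq_empty] at hne
    have hBempty : Bsupd S w A = ∅ := by rw [Bsupd, hne, Finset.sup_empty]; rfl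
    rw [hBempty] at hcon
    exact (L_NdK hA).2.1.ne_empty (Finset.subset_empty.mp hcon)

private lemma L_NIeq {S : ℝ} {w : V → ℝ} {A : Finset V} (hA : A ∈ Nd S w) {i i' : V}
    (hi : i ∈ A \ Bsupd S w A) (hi' : i' ∈ A \ Bsupd S w A) :
    NId S w i = NId S w i' := by
  have hone : ∀ p q : V, p ∈ A \ Bsupd S w A → q ∈ A \ Bsupd S w A →
      NId S w p ⊆ NId S w q := by
    intro p q hp hq j hj
    obtain ⟨hpA, hpB⟩ := Finset.mem_sdiff.mp hp
    obtain ⟨hqA, _⟩ := Finset.mem_sdiff.mp hq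
    obtain ⟨hjI, hadj⟩ := memNI.mp hj
    have hpK : S < 2 * w p := memK.mp ((L_NdK hA).1 hpA)
    have hpNK : p ∈ NKd S w j := memNK.mpr ⟨hpK, hadj⟩
    have hN : NKd S w j ∈ Nd S w := memN.mpr ⟨j, ⟨hjI, ⟨p, hpNK⟩⟩, rfl⟩
    rcases L_comp hN hA with hsub | hsup
    · rcases eq_or_ne (NKd S w j) A with he | hne
      · exact memNI.mpr ⟨hjI, (memNK.mp (he ▸ hqA)).2⟩
      · have hss : NKd S w j ⊂ A := HasSubset.Subset.ssubset_of_ne hsub hne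
        have hBs : NKd S w j ⊆ Bsupd S w A := subset_Bsup hN hss
        exact absurd (hBs hpNK) hpB
    · exact memNI.mpr ⟨hjI, (memNK.mp (hsup hqA)).2⟩
  exact subset_antisymm (hone i i' hi hi') (hone i' i hi' hi)

private lemma L_union {S : ℝ} {w : V → ℝ} {A : Finset V} (hA : A ∈ Nd S w)
    (hBN : Bsupd S w A ∈ Nd S w) {iB i' : V}
    (hiB : iB ∈ Bsupd S w A \ Bsupd S w (Bsupd S w A)) (hi' : i' ∈ A \ Bsupd S w A) :
    NId S w iB = NId S w i' ∪ clsd S w (Bsupd S w A) ∧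
      Disjoint (NId S w i') (clsd S w (Bsupd S w A)) := by
  obtain ⟨hiBB, hiBs⟩ := Finset.mem_sdiff.mp hiB
  obtain ⟨hi'A, hi'B⟩ := Finset.mem_sdiff.mp hi'
  have hBsubA : Bsupd S w A ⊆ A := (L_Bsup hA).1
  have hiBK : S < 2 * w iB := memK.mp ((L_NdK hBN).1 hiBB)
  have hi'K : S < 2 * w i' := memK.mp ((L_NdK hA).1 hi'A)
  constructor
  · ext j
    simp only [Finset.mem_union]
    constructor
    · intro hj
      obtain ⟨hjI, hadj⟩ := memNI.mp hj
      have hjNK : iB ∈ NKd S w j := memNK.mpr ⟨hiBK, hadj⟩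
      have hN : NKd S w j ∈ Nd S w := memN.mpr ⟨j, ⟨hjI, ⟨iB, hjNK⟩⟩, rfl⟩
      rcases L_comp hN hA with hsub | hsup
      · rcases eq_or_ne (NKd S w j) A with he | hne
        · exact Or.inl (memNI.mpr ⟨hjI, (memNK.mp (he ▸ hi'A)).2⟩)
        · have hss : NKd S w j ⊂ A := HasSubset.Subset.ssubset_of_ne hsub hne
          have hsubB : NKd S w j ⊆ Bsupd S w A := subset_Bsup hN hss
          rcases eq_or_ne (NKd S w j) (Bsupd S w A) with he2 | hne2
          · exact Or.inr (memcls.mpr ⟨hjI, he2⟩)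
          · have hss2 : NKd S w j ⊂ Bsupd S w A :=
              HasSubset.Subset.ssubset_of_ne hsubB hne2
            have : NKd S w j ⊆ Bsupd S w (Bsupd S w A) := subset_Bsup hN hss2
            exact absurd (this hjNK) hiBs
      · exact Or.inl (memNI.mpr ⟨hjI, (memNK.mp (hsup hi'A)).2⟩)
    · rintro (hj | hj)
      · obtain ⟨hjI, hadj'⟩ := memNI.mp hj
        have hjNK : i' ∈ NKd S w j := memNK.mpr ⟨hi'K, hadj'⟩
        have hN : NKd S w j ∈ Nd S w := memN.mpr ⟨j, ⟨hjI, ⟨i', hjNK⟩⟩, rfl⟩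
        rcases L_comp hN hA with hsub | hsup
        · rcases eq_or_ne (NKd S w j) A with he | hne
          · exact memNI.mpr ⟨hjI, (memNK.mp (he ▸ (hBsubA hiBB))).2⟩
          · have hss : NKd S w j ⊂ A := HasSubset.Subset.ssubset_of_ne hsub hne
            have : NKd S w j ⊆ Bsupd S w A := subset_Bsup hN hss
            exact absurd (this hjNK) hi'B
        · exact memNI.mpr ⟨hjI, (memNK.mp (hsup (hBsubA hiBB))).2⟩
      · obtain ⟨hjI, hje⟩ := memcls.mp hj
        exact memNI.mpr ⟨hjI, (memNK.mp (hje ▸ hiBB)).2⟩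
  · rw [Finset.disjoint_left]
    intro j hj1 hj2
    obtain ⟨hjI, hadj'⟩ := memNI.mp hj1
    obtain ⟨_, hje⟩ := memcls.mp hj2
    have : i' ∈ NKd S w j := memNK.mpr ⟨hi'K, hadj'⟩
    exact hi'B (hje ▸ this)

end ThresholdSetup

section Eigen

variable {V : Type*} [Fintype V] [DecidableEq V] {S : ℝ} {w : V → ℝ} {μ : ℝ} {x : V → ℝ}

private lemma L_Ieq
    (heig : ∀ v : V, ∑ u ∈ univ.filter (fun u => u ≠ v ∧ S < w u + w v), x u = μ * x v)
    {j : V} (hj : ¬(S < 2 * w j)) : μ * x j = ∑ i ∈ NKd S w j, x i := by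
  rw [← heig j]
  apply Finset.sum_congr _ (fun _ _ => rfl)
  ext u
  simp only [Finset.mem_filter, Finset.mem_univ, true_and, memNK]
  constructor
  · rintro ⟨hne, hlt⟩
    have h2j : 2 * w j ≤ S := not_lt.mp hj
    exact ⟨by linarith, hlt⟩
  · rintro ⟨h2u, hlt⟩
    exact ⟨fun he => hj (he ▸ h2u), hlt⟩

private lemma L_Keq
    (heig : ∀ v : V, ∑ u ∈ univ.filter (fun u => u ≠ v ∧ S < w u + w v), x u = μ * x v)
    {i : V} (hi : S < 2 * w i) :
    (μ + 1) * x i = (∑ i' ∈ Kd S w, x i') + ∑ j ∈ NId S w i, x j := by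
  have hsplit : univ.filter (fun u => u ≠ i ∧ S < w u + w i) =
      ((Kd S w).erase i) ∪ NId S w i := by
    ext u
    simp only [Finset.mem_filter, Finset.mem_univ, true_and, Finset.mem_union,
      Finset.mem_erase, memK, memNI]
    constructor
    · rintro ⟨hne, hlt⟩
      by_cases hu : S < 2 * w u
      · exact Or.inl ⟨hne, hu⟩
      · exact Or.inr ⟨hu, by linarith⟩
    · rintro (⟨hne, hu⟩ | ⟨hu, hlt⟩)
      · exact ⟨hne, by linarith⟩
      · exact ⟨fun he => hu (he ▸ hi), by linarith⟩
  have hdisj : Disjoint ((Kd S w).erase i) (NId S w i) := by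
    rw [Finset.disjoint_left]
    intro u hu1 hu2
    exact (memNI.mp hu2).1 (memK.mp (Finset.mem_of_mem_erase hu1))
  have h := heig i
  rw [hsplit, Finset.sum_union hdisj,
    Finset.sum_erase_eq_sub (memK.mpr hi : i ∈ Kd S w)] at h
  linarith

end Eigen

private lemma arith_sqrt (μ : ℝ) (hlt : μ < -1) (hge : ¬ μ < (-1 - Real.sqrt 2)/2) :
    μ^2 + μ ≤ 1/4 := by
  push_neg at hge
  have h2 : Real.sqrt 2 ^ 2 = 2 := Real.sq_sqrt (by norm_num)
  have h0 : (0:ℝ) ≤ Real.sqrt 2 := Real.sqrt_nonneg 2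
  nlinarith [mul_nonneg (show (0:ℝ) ≤ 2*μ+1+Real.sqrt 2 by linarith)
    (show (0:ℝ) ≤ Real.sqrt 2 - (2*μ+1) by linarith)]

-- base case
private lemma arithL1 (μ n u v : ℝ) (hμ : μ < -1) (hn : 1 ≤ n) (hu : u ≠ 0)
    (e : μ * v = n * u) : u^2 - 2*μ*(v*u) < 0 := by
  have hu2 : 0 < u^2 := lt_of_le_of_ne (sq_nonneg u) (Ne.symm (pow_ne_zero 2 hu))
  have e2 : 2*μ*(v*u) = 2*n * u^2 := by linear_combination (2*u)*e
  nlinarith [e2, hu2, mul_pos (show (0:ℝ) < 2*n-1 by linarith) hu2]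

-- step lemma
private lemma arithL2 (μ a b u v u' v' : ℝ) (hμ : μ < -1) (hpq : μ^2 + μ ≤ 1/4)
    (ha : 1 ≤ a) (hb : 1 ≤ b) (hIH : u^2 - 2*μ*(v*u) < 0)
    (e1 : (μ+1)*u' = (μ+1)*u - b*v) (e2 : μ*v' = μ*v + a*u') :
    u'^2 - 2*μ*(v'*u') < 0 := by
  have hμ32 : -(3:ℝ)/2 < μ := by nlinarith
  have hH : 0 < 2*μ*(v*u) - u^2 := by linarith
  have hu : u ≠ 0 := by
    intro h; rw [h] at hH; simp at hH
  have hu2 : 0 < u^2 := lt_of_le_of_ne (sq_nonneg u) (Ne.symm (pow_ne_zero 2 hu))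
  have hvu : (0:ℝ) ≤ 2*μ*(v*u) := by nlinarith
  -- factor 1 positive
  have hF1' : 0 < (-2*μ)*((μ+1)*u^2 - b*(v*u)) := by
    nlinarith [mul_nonneg (show (0:ℝ) ≤ b-1 by linarith) hvu,
      mul_nonneg (show (0:ℝ) ≤ 1/4 - (μ^2+μ) by linarith) (sq_nonneg u)]
  have hF1 : 0 < (μ+1)*u^2 - b*(v*u) := by
    by_contra hc; push_neg at hc
    nlinarith [mul_nonpos_of_nonneg_of_nonpos (show (0:ℝ) ≤ -2*μ by linarith) hc]
  -- factor 2 positive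
  have hF2' : 0 < (-2*μ)*((μ+1)*u^2 - (b - 2*μ^2 - 2*μ)*(v*u)) := by
    nlinarith [mul_nonneg (show (0:ℝ) ≤ b - 2*(μ^2+μ) - 1/2 by linarith) hH.le,
      mul_nonneg (show (0:ℝ) ≤ b - 4*(μ^2+μ) by linarith) (sq_nonneg u)]
  have hF2 : 0 < (μ+1)*u^2 - (b - 2*μ^2 - 2*μ)*(v*u) := by
    by_contra hc; push_neg at hc
    nlinarith [mul_nonpos_of_nonneg_of_nonpos (show (0:ℝ) ≤ -2*μ by linarith) hc]
  -- F > 0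
  have hFu : 0 < (((μ+1)*u - b*v)^2 + 2*μ*(μ+1)*(((μ+1)*u - b*v)*v)) * u^2 := by
    have hid : (((μ+1)*u - b*v)^2 + 2*μ*(μ+1)*(((μ+1)*u - b*v)*v)) * u^2
        = ((μ+1)*u^2 - b*(v*u)) * ((μ+1)*u^2 - (b - 2*μ^2 - 2*μ)*(v*u)) := by ring
    rw [hid]; exact mul_pos hF1 hF2
  have hF : 0 < ((μ+1)*u - b*v)^2 + 2*μ*(μ+1)*(((μ+1)*u - b*v)*v) := by
    by_contra hc; push_neg at hc
    nlinarith [mul_nonpos_of_nonpos_of_nonneg hc (sq_nonneg u)]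
  -- reduced goal
  have hRG : (1-2*a)*((μ+1)*u - b*v)^2 - 2*μ*(μ+1)*(((μ+1)*u - b*v)*v) < 0 := by
    nlinarith [mul_nonneg (show (0:ℝ) ≤ 2*a-2 by linarith) (sq_nonneg ((μ+1)*u - b*v))]
  -- identity connecting to goal
  have hid2 : (μ+1)^2*(u'^2 - 2*μ*(v'*u')) =
      (1-2*a)*((μ+1)*u - b*v)^2 - 2*μ*(μ+1)*(((μ+1)*u - b*v)*v) := by
    linear_combination ((1-2*a)*((μ+1)*u' + ((μ+1)*u - b*v)) - 2*μ*(μ+1)*v) * e1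
      - 2*(μ+1)^2*u' * e2
  have hs : 0 < (μ+1)^2 := mul_pos_of_neg_of_neg (by linarith : μ+1 < 0) (by linarith : μ+1 < 0) |>.trans_eq (by ring)
  by_contra hc; push_neg at hc
  nlinarith [mul_nonneg hs.le hc]

private lemma arithL3a (μ u v : ℝ) (hμ : μ < -1) (hu : u ≠ 0)
    (hIH : u^2 - 2*μ*(v*u) < 0) (e : (μ+1)*u = μ*v + v) : False := by
  have hu2 : 0 < u^2 := lt_of_le_of_ne (sq_nonneg u) (Ne.symm (pow_ne_zero 2 hu))
  have huv : u = v := mul_left_cancel₀ (show (μ+1) ≠ 0 by linarith)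
    (show (μ+1)*u = (μ+1)*v by linarith)
  rw [← huv] at hIH
  nlinarith [mul_pos (show (0:ℝ) < 1 - 2*μ by linarith) hu2]

private lemma arithL3b (μ b u v : ℝ) (hμ : μ < -1) (hpq : μ^2 + μ ≤ 1/4) (hb : 2 ≤ b)
    (hu : u ≠ 0) (hIH : u^2 - 2*μ*(v*u) < 0) (e : (μ+1)*u = μ*v + b*v) : False := by
  have hμ32 : -(3:ℝ)/2 < μ := by nlinarith
  have hu2 : 0 < u^2 := lt_of_le_of_ne (sq_nonneg u) (Ne.symm (pow_ne_zero 2 hu))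
  have hμb : 0 < μ + b := by linarith
  have h1 : (μ+b)*(v*u) = (μ+1)*u^2 := by linear_combination (-u)*e
  have h2 : (μ+b)*(u^2 - 2*μ*(v*u)) < 0 := mul_neg_of_pos_of_neg hμb hIH
  have h3 : 2*μ*((μ+b)*(v*u)) = 2*μ*((μ+1)*u^2) := by rw [h1]
  have h4 : (2*μ^2+2*μ)*u^2 ≤ (1/2)*u^2 := by nlinarith [mul_nonneg (show (0:ℝ) ≤ 1/4 - (μ^2+μ) by linarith) (sq_nonneg u)]
  nlinarith [h2, h3, h4, hu2, mul_pos (show (0:ℝ) < b - 2 + (μ + 3/2) by linarith) hu2]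

private lemma arithL3c (μ b m u v : ℝ) (hμ : μ < -1) (hpq : μ^2 + μ ≤ 1/4) (hb : 1 ≤ b)
    (hm : 1 ≤ m) (hu : u ≠ 0) (hIH : u^2 - 2*μ*(v*u) < 0)
    (e : ((μ+1)*u - b*v)*(μ+1-m) = μ*(μ+1)*v) : False := by
  have hμ32 : -(3:ℝ)/2 < μ := by nlinarith
  have hu2 : 0 < u^2 := lt_of_le_of_ne (sq_nonneg u) (Ne.symm (pow_ne_zero 2 hu))
  have hH : 0 < 2*μ*(v*u) - u^2 := by linarith
  have key : (-(v*u))*(b*(m-μ-1) - (μ^2+μ)) = (-(μ+1))*(m-μ-1)*u^2 := by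
    linear_combination (-u)*e
  have hBpos : 0 < b*(m-μ-1) - (μ^2+μ) := by
    nlinarith [mul_nonneg (show (0:ℝ) ≤ b-1 by linarith) (show (0:ℝ) ≤ m-μ-1 by linarith)]
  have ht2q : 0 < (-(v*u))*(2*(-μ)) - u^2 := by nlinarith [hH]
  nlinarith [key, hu2, mul_pos ht2q hBpos,
    mul_nonneg (show (0:ℝ) ≤ 1/4 - (μ^2+μ) by linarith) (show (0:ℝ) ≤ 2*(m-μ-1)+1 by linarith),
    mul_nonneg (show (0:ℝ) ≤ b-1 by linarith) (show (0:ℝ) ≤ m-μ-1 by linarith),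
    mul_nonneg (show (0:ℝ) ≤ 1/4 - (μ^2+μ) by linarith) (sq_nonneg u)]

section Invariant

variable {V : Type*} [Fintype V] [DecidableEq V] {S : ℝ} {w : V → ℝ} {μ : ℝ} {x : V → ℝ}

private lemma L_inv
    (heig : ∀ v : V, ∑ u ∈ univ.filter (fun u => u ≠ v ∧ S < w u + w v), x u = μ * x v)
    (hμ : μ < -1) (hpq : μ^2 + μ ≤ 1/4) :
    ∀ n : ℕ, ∀ A ∈ Nd S w, A.card ≤ n →
      (∀ i ∈ A, x i = 0) ∨
      (∃ u v : ℝ, (∀ i ∈ A \ Bsupd S w A, x i = u) ∧ (∀ j ∈ clsd S w A, x j = v) ∧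
        u^2 - 2*μ*(v*u) < 0) := by
  have hμ1 : μ + 1 ≠ 0 := by intro h; linarith
  have hμ0 : μ ≠ 0 := by intro h; linarith
  intro n
  induction n with
  | zero =>
    intro A hA hc
    exact absurd (Finset.card_eq_zero.mp (Nat.le_zero.mp hc))
      ((L_NdK hA).2.1.ne_empty)
  | succ n ih =>
    intro A hA hc
    obtain ⟨hAK, hAne, hclsAne⟩ := L_NdK hA
    obtain ⟨hBsub, hblkne, hBfull⟩ := L_Bsup hA
    obtain ⟨i₀, hi₀⟩ := hblkne
    have hi₀K : S < 2 * w i₀ := memK.mp (hAK (Finset.mem_sdiff.mp hi₀).1)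
    have hu'all : ∀ i ∈ A \ Bsupd S w A, x i = x i₀ := by
      intro i hi
      have hNIe := L_NIeq hA hi hi₀
      have h1 := L_Keq heig (memK.mp (hAK (Finset.mem_sdiff.mp hi).1))
      have h2 := L_Keq heig hi₀K
      rw [hNIe] at h1
      exact mul_left_cancel₀ hμ1 (h1.trans h2.symm)
    obtain ⟨j₀, hj₀⟩ := hclsAne
    obtain ⟨hj₀I, hj₀NK⟩ := memcls.mp hj₀
    have hQA : μ * x j₀ = ∑ i ∈ A, x i := by
      have h := L_Ieq heig hj₀I
      rw [hj₀NK] at h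
      exact h
    have hv'all : ∀ j ∈ clsd S w A, x j = x j₀ := by
      intro j hj
      obtain ⟨hjI, hjNK⟩ := memcls.mp hj
      have h1 := L_Ieq heig hjI
      rw [hjNK] at h1
      exact mul_left_cancel₀ hμ0 (h1.trans hQA.symm)
    by_cases hfe : ((Nd S w).filter (fun C => C ⊂ A)).Nonempty
    · -- inductive step
      obtain ⟨hBN, hBA⟩ := hBfull hfe
      have hIH := ih (Bsupd S w A) hBN
        (by have := Finset.card_lt_card hBA; omega)
      obtain ⟨hBK', hBne', hclsBne'⟩ := L_NdK hBN
      obtain ⟨_, hblkBne, _⟩ := L_Bsup hBN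
      obtain ⟨iB, hiB⟩ := hblkBne
      obtain ⟨jB, hjB⟩ := hclsBne'
      have hiBK : S < 2 * w iB := memK.mp (hBK' (Finset.mem_sdiff.mp hiB).1)
      obtain ⟨hUn, hDisj⟩ := L_union hA hBN hiB hi₀
      have eqA := L_Keq heig hi₀K
      have eqB := L_Keq heig hiBK
      have hsumrel : ∑ j ∈ NId S w iB, x j =
          ∑ j ∈ NId S w i₀, x j + ∑ j ∈ clsd S w (Bsupd S w A), x j := by
        rw [hUn, Finset.sum_union hDisj]
      have hQB : ∀ j ∈ clsd S w (Bsupd S w A), μ * x j = ∑ i ∈ Bsupd S w A, x i := by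
        intro j hj
        obtain ⟨hjI, hjNK⟩ := memcls.mp hj
        have h := L_Ieq heig hjI
        rw [hjNK] at h
        exact h
      rcases hIH with hZ | ⟨u, v, huB, hvB, hineq⟩
      · -- zero branch propagates
        left
        have hxiB : x iB = 0 := hZ iB (Finset.mem_sdiff.mp hiB).1
        have hclsB0 : ∀ j ∈ clsd S w (Bsupd S w A), x j = 0 := by
          intro j hj
          have h := hQB j hj
          rw [Finset.sum_eq_zero hZ] at h
          rcases mul_eq_zero.mp h with h' | h'
          · exact absurd h' hμ0
          · exact h'
        have hsum0 : ∑ j ∈ clsd S w (Bsupd S w A), x j = 0 :=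
          Finset.sum_eq_zero hclsB0
        have h0 : (μ+1) * x i₀ = (μ+1) * x iB := by
          rw [hxiB] at eqB ⊢
          linarith [eqA, eqB, hsumrel, hsum0]
        have hu0 : x i₀ = 0 := by
          have := mul_left_cancel₀ hμ1 h0
          rw [this, hxiB]
        intro i hi
        by_cases hiBmem : i ∈ Bsupd S w A
        · exact hZ i hiBmem
        · rw [hu'all i (Finset.mem_sdiff.mpr ⟨hi, hiBmem⟩), hu0]
      · -- inequality branch
        right
        refine ⟨x i₀, x j₀, hu'all, hv'all, ?_⟩
        have hxiBu : x iB = u := huB iB hiB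
        have hvjB : x jB = v := hvB jB hjB
        have hsumclsB : ∑ j ∈ clsd S w (Bsupd S w A), x j =
            ((clsd S w (Bsupd S w A)).card : ℝ) * v := by
          rw [Finset.sum_congr rfl hvB, Finset.sum_const, nsmul_eq_mul]
        have hsumblkA : ∑ i ∈ A \ Bsupd S w A, x i =
            ((A \ Bsupd S w A).card : ℝ) * x i₀ := by
          rw [Finset.sum_congr rfl hu'all, Finset.sum_const, nsmul_eq_mul]
        have hQBs : μ * v = ∑ i ∈ Bsupd S w A, x i := by
          rw [← hvjB]; exact hQB jB hjB
        have e1 : (μ+1) * x i₀ = (μ+1) * u - ((clsd S w (Bsupd S w A)).card : ℝ) * v := by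
          rw [hxiBu] at eqB
          linarith [eqA, eqB, hsumrel, hsumclsB]
        have e2 : μ * x j₀ = μ * v + ((A \ Bsupd S w A).card : ℝ) * x i₀ := by
          have hsp := Finset.sum_sdiff (f := x) hBsub
          linarith [hQA, hsp, hQBs, hsumblkA]
        have hb1 : 1 ≤ ((clsd S w (Bsupd S w A)).card : ℝ) := by
          exact_mod_cast Finset.card_pos.mpr ⟨jB, hjB⟩
        have ha1 : 1 ≤ ((A \ Bsupd S w A).card : ℝ) := by
          exact_mod_cast Finset.card_pos.mpr ⟨i₀, hi₀⟩
        exact arithL2 μ _ _ u v (x i₀) (x j₀) hμ hpq ha1 hb1 hineq e1 e2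
    · -- base case
      rw [Finset.not_nonempty_iff_eq_empty] at hfe
      have hBempty : Bsupd S w A = ∅ := by
        rw [Bsupd, hfe, Finset.sup_empty]
        rfl
      have hallA : ∀ i ∈ A, x i = x i₀ := by
        intro i hi
        exact hu'all i (Finset.mem_sdiff.mpr ⟨hi, by rw [hBempty]; exact notMem_empty i⟩)
      by_cases hu0 : x i₀ = 0
      · left
        intro i hi
        rw [hallA i hi, hu0]
      · right
        refine ⟨x i₀, x j₀, hu'all, hv'all, ?_⟩
        have hsums : ∑ i ∈ A, x i = (A.card : ℝ) * x i₀ := by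
          rw [Finset.sum_congr rfl hallA, Finset.sum_const, nsmul_eq_mul]
        have e : μ * x j₀ = (A.card : ℝ) * x i₀ := by rw [hQA, hsums]
        have hn : 1 ≤ (A.card : ℝ) := by exact_mod_cast Finset.card_pos.mpr hAne
        exact arithL1 μ _ (x i₀) (x j₀) hμ hn hu0 e

end Invariant

section Final

variable {V : Type*} [Fintype V] [DecidableEq V] {S : ℝ} {w : V → ℝ} {μ : ℝ} {x : V → ℝ}

private lemma L_cliquesum (hμ : μ < -1)
    (T : Finset V) (hT : ∀ i ∈ T, (μ+1) * x i = ∑ i' ∈ T, x i') :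
    ∀ i ∈ T, x i = 0 := by
  have hμ1 : μ + 1 ≠ 0 := by intro h; linarith
  have hsum : (μ+1) * (∑ i ∈ T, x i) = (T.card : ℝ) * (∑ i' ∈ T, x i') := by
    rw [Finset.mul_sum, Finset.sum_congr rfl hT, Finset.sum_const, nsmul_eq_mul]
  have hT0 : ∑ i ∈ T, x i = 0 := by
    have hfac : ((μ+1) - (T.card : ℝ)) * (∑ i ∈ T, x i) = 0 := by
      linear_combination hsum
    rcases mul_eq_zero.mp hfac with h | h
    · exfalso
      have : (0:ℝ) ≤ (T.card : ℝ) := Nat.cast_nonneg _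
      linarith
    · exact h
  intro i hi
  have h := hT i hi
  rw [hT0, mul_eq_zero] at h
  rcases h with h | h
  · exact absurd h hμ1
  · exact h

private lemma L_false
    (heig : ∀ v : V, ∑ u ∈ univ.filter (fun u => u ≠ v ∧ S < w u + w v), x u = μ * x v)
    (hμ : μ < -1) (hpq : μ^2 + μ ≤ 1/4) (hx0 : x ≠ 0) : False := by
  have hμ1 : μ + 1 ≠ 0 := by intro h; linarith
  have hμ0 : μ ≠ 0 := by intro h; linarith
  by_cases hNe : (Nd S w).Nonempty
  · obtain ⟨M, hM, hMmax'⟩ := Finset.exists_max_image (Nd S w) Finset.card hNe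
    have hMmax : ∀ C ∈ Nd S w, C ⊆ M := by
      intro C hC
      rcases L_comp hC hM with h | h
      · exact h
      · exact Finset.le_iff_subset.mp
          (le_of_eq (Finset.eq_of_subset_of_card_le h (hMmax' C hC)).symm)
    obtain ⟨hMK, hMne, hclsMne⟩ := L_NdK hM
    obtain ⟨_, hblkMne, _⟩ := L_Bsup hM
    have houter : ∀ i ∈ Kd S w \ M, (μ+1) * x i = ∑ i' ∈ Kd S w, x i' := by
      intro i hi
      obtain ⟨hiK, hiM⟩ := Finset.mem_sdiff.mp hi
      have hNIempty : NId S w i = ∅ := by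
        rw [Finset.eq_empty_iff_forall_notMem]
        intro j hj
        obtain ⟨hjI, hadj⟩ := memNI.mp hj
        have hmem : i ∈ NKd S w j := memNK.mpr ⟨memK.mp hiK, hadj⟩
        have hN : NKd S w j ∈ Nd S w := memN.mpr ⟨j, ⟨hjI, ⟨i, hmem⟩⟩, rfl⟩
        exact hiM (hMmax _ hN hmem)
      have h := L_Keq heig (memK.mp hiK)
      rw [hNIempty, Finset.sum_empty] at h
      linarith
    have hsp := Finset.sum_sdiff (f := x) hMK
    rcases L_inv heig hμ hpq M.card M hM le_rfl with hZ | ⟨u, v, hu, hv, hineq⟩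
    · -- zero branch: x = 0
      apply hx0
      have hMsum0 : ∑ i ∈ M, x i = 0 := Finset.sum_eq_zero hZ
      have hσ : ∑ i' ∈ Kd S w, x i' = ∑ i ∈ Kd S w \ M, x i := by linarith
      have houter' : ∀ i ∈ Kd S w \ M, (μ+1) * x i = ∑ i' ∈ Kd S w \ M, x i' := by
        intro i hi
        rw [← hσ]
        exact houter i hi
      have hKz' := L_cliquesum hμ _ houter'
      have hKzero : ∀ i ∈ Kd S w, x i = 0 := by
        intro i hiK'
        by_cases him : i ∈ M
        · exact hZ i him
        · exact hKz' i (Finset.mem_sdiff.mpr ⟨hiK', him⟩)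
      funext v0
      show x v0 = 0
      by_cases h : S < 2 * w v0
      · exact hKzero v0 (memK.mpr h)
      · have h1 := L_Ieq heig h
        rw [Finset.sum_eq_zero (fun i hi => hKzero i (memK.mpr (memNK.mp hi).1))] at h1
        rcases mul_eq_zero.mp h1 with h' | h'
        · exact absurd h' hμ0
        · exact h'
    · -- contradiction branch
      obtain ⟨iB, hiB⟩ := hblkMne
      obtain ⟨jB, hjB⟩ := hclsMne
      have hxu : x iB = u := hu iB hiB
      have hxv : x jB = v := hv jB hjB
      have hu0 : u ≠ 0 := by
        intro h
        rw [h] at hineq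
        norm_num at hineq
      have hiBK : S < 2 * w iB := memK.mp (hMK (Finset.mem_sdiff.mp hiB).1)
      have hNIiB : NId S w iB = clsd S w M := by
        ext j
        constructor
        · intro hj
          obtain ⟨hjI, hadj⟩ := memNI.mp hj
          have hmem : iB ∈ NKd S w j := memNK.mpr ⟨hiBK, hadj⟩
          have hN : NKd S w j ∈ Nd S w := memN.mpr ⟨j, ⟨hjI, ⟨iB, hmem⟩⟩, rfl⟩
          have hsub := hMmax _ hN
          rcases eq_or_ne (NKd S w j) M with he | hne
          · exact memcls.mpr ⟨hjI, he⟩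
          · have hss : NKd S w j ⊂ M := HasSubset.Subset.ssubset_of_ne hsub hne
            have : NKd S w j ⊆ Bsupd S w M := subset_Bsup hN hss
            exact absurd (this hmem) (Finset.mem_sdiff.mp hiB).2
        · intro hj
          obtain ⟨hjI, hje⟩ := memcls.mp hj
          exact memNI.mpr ⟨hjI, (memNK.mp (hje ▸ (Finset.mem_sdiff.mp hiB).1)).2⟩
      have hE1 : (μ+1) * u = (∑ i' ∈ Kd S w, x i') + ((clsd S w M).card : ℝ) * v := by
        have h := L_Keq heig hiBK
        rw [hNIiB, Finset.sum_congr rfl hv, Finset.sum_const, nsmul_eq_mul, hxu] at h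
        exact h
      have hE2 : μ * v = ∑ i ∈ M, x i := by
        obtain ⟨hjI, hje⟩ := memcls.mp hjB
        have h := L_Ieq heig hjI
        rw [hje, hxv] at h
        exact h
      have hb1 : 1 ≤ ((clsd S w M).card : ℝ) := by
        exact_mod_cast Finset.card_pos.mpr ⟨jB, hjB⟩
      by_cases hm : (Kd S w \ M).Nonempty
      · have hm1 : 1 ≤ ((Kd S w \ M).card : ℝ) := by
          exact_mod_cast Finset.card_pos.mpr hm
        have hT : (μ+1) * (∑ i ∈ Kd S w \ M, x i) =
            ((Kd S w \ M).card : ℝ) * (∑ i' ∈ Kd S w, x i') := by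
          rw [Finset.mul_sum, Finset.sum_congr rfl houter, Finset.sum_const, nsmul_eq_mul]
        have e : ((μ+1)*u - ((clsd S w M).card : ℝ)*v) * (μ+1-((Kd S w \ M).card : ℝ)) =
            μ*(μ+1)*v := by
          linear_combination (μ+1-((Kd S w \ M).card : ℝ))*hE1 - (μ+1)*hsp - (μ+1)*hE2 + hT
        exact arithL3c μ _ _ u v hμ hpq hb1 hm1 hu0 hineq e
      · have h0 : ∑ i ∈ Kd S w \ M, x i = 0 := by
          rw [Finset.not_nonempty_iff_eq_empty.mp hm, Finset.sum_empty]
        have hKM : ∑ i' ∈ Kd S w, x i' = μ * v := by linarith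
        have e0 : (μ+1)*u = μ*v + ((clsd S w M).card : ℝ)*v := by linarith
        rcases Nat.lt_or_ge (clsd S w M).card 2 with hcc | hcc
        · have h1 : 0 < (clsd S w M).card := Finset.card_pos.mpr ⟨jB, hjB⟩
          have hcc1 : (clsd S w M).card = 1 := by omega
          rw [hcc1] at e0
          norm_num at e0
          exact arithL3a μ u v hμ hu0 hineq (by linarith)
        · have hc2 : 2 ≤ ((clsd S w M).card : ℝ) := by exact_mod_cast hcc
          exact arithL3b μ _ u v hμ hpq hc2 hu0 hineq e0
  · -- Nd empty : no edges between K and I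
    apply hx0
    have hKeq0 : ∀ i ∈ Kd S w, (μ+1) * x i = ∑ i' ∈ Kd S w, x i' := by
      intro i hi
      have hNIempty : NId S w i = ∅ := by
        rw [Finset.eq_empty_iff_forall_notMem]
        intro j hj
        obtain ⟨hjI, hadj⟩ := memNI.mp hj
        have hmem : i ∈ NKd S w j := memNK.mpr ⟨memK.mp hi, hadj⟩
        exact hNe ⟨_, memN.mpr ⟨j, ⟨hjI, ⟨i, hmem⟩⟩, rfl⟩⟩
      have h := L_Keq heig (memK.mp hi)
      rw [hNIempty, Finset.sum_empty] at h
      linarith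
    have hKzero := L_cliquesum hμ _ hKeq0
    funext v0
    show x v0 = 0
    by_cases h : S < 2 * w v0
    · exact hKzero v0 (memK.mpr h)
    · have h1 := L_Ieq heig h
      rw [Finset.sum_eq_zero (fun i hi => hKzero i (memK.mpr (memNK.mp hi).1))] at h1
      rcases mul_eq_zero.mp h1 with h' | h'
      · exact absurd h' hμ0
      · exact h'

end Final

theorem threshold_eigenvalue_lt_neg_one_lt {V : Type*} [Fintype V]
    (G : SimpleGraph V) (hG : G.IsThreshold) (μ : ℝ) (hμ : G.HasAdjEigenvalue μ)
    (hlt : μ < -1) : μ < (-1 - Real.sqrt 2) / 2 := by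
  classical
  by_contra hge
  obtain ⟨S, w, hGadj⟩ := hG
  obtain ⟨x, hx0, heq⟩ := hμ
  have heig : ∀ v : V, ∑ u ∈ Finset.univ.filter (fun u => u ≠ v ∧ S < w u + w v), x u
      = μ * x v := by
    intro v
    have h := congrFun heq v
    rw [SimpleGraph.adjMatrix_mulVec_apply] at h
    simp only [Pi.smul_apply, smul_eq_mul] at h
    rw [← h, SimpleGraph.neighborFinset_eq_filter]
    apply Finset.sum_congr _ (fun _ _ => rfl)
    ext u
    simp only [Finset.mem_filter, Finset.mem_univ, true_and]
    constructor
    · rintro ⟨hne, hlt'⟩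
      exact G.adj_symm ((hGadj u v hne).mpr hlt')
    · intro hadj
      have hne : u ≠ v := fun hh => G.loopless.irrefl v (hh ▸ hadj)
      exact ⟨hne, (hGadj u v hne).mp (G.adj_symm hadj)⟩
  exact L_false heig hlt (arith_sqrt μ hlt hge) hx0
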